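/- The function h has q-Λ-variation at most 1: V_{Λ,q}(h) ≤ Σ_{n=2}^∞ V_{Λ,q}(h_n) ≤ 1. In particular h belongs to the Waterman–Shiba class ΛBV^{(q)} and, since h(0) = 0, its norm satisfies ‖h‖_{Λ,q} = |h(0)| + V_{Λ,q}(h) ≤ 1. -/

import Mathlib

open Filter Set
open scoped ENNReal Classical

noncomputable section

/-- `Λ = （λ_i)_{i≥1}` is a Waterman sequence: positive, nondecreasing, `λ_1 = 1`,
and `∑ 1/λ_i = ∞`. -/
def WatermanSeq (lam : ℕ → ℝ) : Prop :=
  (∀ i, 0 < lam i) ∧ Monotone lam ∧ lam 1 = 1 ∧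
    Tendsto (fun n => ∑ i ∈ Finset.Icc 1 n, 1 / lam i) atTop atTop

/-- `Λ(M) = ∑_{i=1}^{M} 1/λ_i`. -/
def LamSum (lam : ℕ → ℝ) (M : ℕ) : ℝ := ∑ i ∈ Finset.Icc 1 M, 1 / lam i

/-- `{[a i, b i]}_{i < m}` is a finite family of pairwise non-overlapping closed
subintervals of `[0,1]`. -/
def NonOverlapping (m : ℕ) (a b : ℕ → ℝ) : Prop :=
  (∀ i < m, 0 ≤ a i ∧ a i ≤ b i ∧ b i ≤ 1) ∧
    ∀ i < m, ∀ j < m, i ≠ j → b i ≤ a j ∨ b j ≤ a i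

/-- `(∑_{i=1}^m |f(I_i)|^s / λ_i)^{1/s}` for the family `I_i = [a i, b i]`. -/
def vSum (lam : ℕ → ℝ) (s : ℝ) (f : ℝ → ℝ) (m : ℕ) (a b : ℕ → ℝ) : ℝ :=
  (∑ i ∈ Finset.range m, |f (b i) - f (a i)| ^ s / lam (i + 1)) ^ (1 / s)

/-- The `s`-`Λ`-variation `V_{Λ,s}(f)`, an element of `[0,∞]`. -/
def variation (lam : ℕ → ℝ) (s : ℝ) (f : ℝ → ℝ) : ℝ≥0∞ :=
  ⨆ (m : ℕ) (a : ℕ → ℝ) (b : ℕ → ℝ) (_ : NonOverlapping m a b),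
    ENNReal.ofReal (vSum lam s f m a b)

/-- `M_n = 2^(3n-1)`. -/
def Mseq (n : ℕ) : ℕ := 2 ^ (3 * n - 1)

/-- `b_{n,j} = 2^{-n} + (2j-2)/2^{4n}`. -/
def bb (n j : ℕ) : ℝ := ((2 : ℝ) ^ n)⁻¹ + (2 * (j : ℝ) - 2) / 2 ^ (4 * n)

/-- `c_{n,j} = 2^{-n} + (2j-1)/2^{4n}`. -/
def cc (n j : ℕ) : ℝ := ((2 : ℝ) ^ n)⁻¹ + (2 * (j : ℝ) - 1) / 2 ^ (4 * n)

/-- The function `h_n`. -/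
def hfun (lam : ℕ → ℝ) (q : ℝ) (n : ℕ) (y : ℝ) : ℝ :=
  if ∃ j, 1 ≤ j ∧ j ≤ (Mseq n - 2) / 2 ∧ y ∈ Set.Ico (bb n j) (cc n j) then
    ((2 : ℝ) ^ n)⁻¹ * LamSum lam (Mseq n) ^ (-(1 / q))
  else 0

/-- `h = ∑_{n=2}^∞ h_n`. -/
def hh (lam : ℕ → ℝ) (q : ℝ) (y : ℝ) : ℝ := ∑' n : ℕ, hfun lam q (n + 2) y

/-- The sequence `r`: `r_{2k} = c_{k+2,(M_{k+2}-2)/2}`, `r_{2k+1} = b_{k+2,(M_{k+2}-2)/2}`. -/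
def rr (i : ℕ) : ℝ :=
  if i % 2 = 0 then cc (i / 2 + 2) ((Mseq (i / 2 + 2) - 2) / 2)
  else bb (i / 2 + 2) ((Mseq (i / 2 + 2) - 2) / 2)

/-- `f(J_i) = f(r_{i-1}) - f(r_i)` where `J_i = [r_i, r_{i-1}]` (for `i ≥ 1`). -/
def incrJ (f : ℝ → ℝ) (i : ℕ) : ℝ := f (rr (i - 1)) - f (rr i)

/-- `p_{(n_k)}(j) = (-1)^{k+1}` if `j = n_k` for some `k ≥ 1`, and `0` otherwise. -/
def psgn (nseq : ℕ → ℕ) (j : ℕ) : ℝ :=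
  if h : ∃ k, 1 ≤ k ∧ nseq k = j then (-1 : ℝ) ^ (h.choose + 1) else 0

/-- The `j`-th (here `j = m+1`, `m : ℕ`) term of the series defining `L_{(n_k)}`:
`p_{(n_k)}(j) ∑_{i=1}^2 (-1)^i f(J_{2(j-1)+i}) |h(J_{2(j-1)+i})| / λ_{2(j-1)+i}`. -/
def Lterm (lam : ℕ → ℝ) (q : ℝ) (nseq : ℕ → ℕ) (f : ℝ → ℝ) (m : ℕ) : ℝ :=
  psgn nseq (m + 1) * ∑ i ∈ Finset.Icc 1 2,
    (-1 : ℝ) ^ i * incrJ f (2 * m + i) * |incrJ (hh lam q) (2 * m + i)| / lam (2 * m + i)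

/-- The functional `L_{(n_k)}(f) = f(J') + ∑_{j=1}^∞ (…)`, with `J' = [3/8, 3/8 + 2⁻⁸]`. -/
def Lfun (lam : ℕ → ℝ) (q : ℝ) (nseq : ℕ → ℕ) (f : ℝ → ℝ) : ℝ :=
  (f (3 / 8 + 1 / 2 ^ 8) - f (3 / 8)) + ∑' m : ℕ, Lterm lam q nseq f m

/-- The tent function `f_l`. -/
def tent (nseq : ℕ → ℕ) (l : ℕ) (x : ℝ) : ℝ :=
  if 3 / 8 < x ∧ x ≤ 3 / 8 + 1 / 2 ^ 8 then psgn nseq l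
  else if rr (2 * l) ≤ x ∧ x ≤ rr (2 * l - 1) then
    (x - rr (2 * l)) / (rr (2 * l - 1) - rr (2 * l))
  else if rr (2 * l - 1) ≤ x ∧ x ≤ rr (2 * l - 2) then
    (rr (2 * l - 2) - x) / (rr (2 * l - 2) - rr (2 * l - 1))
  else 0

section Aux

variable {lam : ℕ → ℝ} {q : ℝ}

lemma lamsum_eq_range (M : ℕ) : LamSum lam M = ∑ i ∈ Finset.range M, 1 / lam (i + 1) := by
  unfold LamSum
  rw [show Finset.Icc 1 M = Finset.Ico 1 (M+1) by rw [Finset.Ico_add_one_right_eq_Icc], Finset.sum_Ico_eq_sum_range]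
  simp [add_comm]

lemma one_le_lam (hlam : WatermanSeq lam) {i : ℕ} (hi : 1 ≤ i) : 1 ≤ lam i := by
  have := hlam.2.1 hi
  rw [hlam.2.2.1] at this
  exact this

lemma lamsum_ge_one (hlam : WatermanSeq lam) {M : ℕ} (hM : 1 ≤ M) : 1 ≤ LamSum lam M := by
  unfold LamSum
  have h1 : (1:ℕ) ∈ Finset.Icc 1 M := Finset.mem_Icc.2 ⟨le_refl 1, hM⟩
  have := Finset.single_le_sum (f := fun i => 1 / lam i)
    (fun i _ => div_nonneg zero_le_one (hlam.1 i).le) h1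
  · calc (1:ℝ) = 1 / lam 1 := by rw [hlam.2.2.1]; norm_num
      _ ≤ _ := this

lemma lamsum_pos (hlam : WatermanSeq lam) {M : ℕ} (hM : 1 ≤ M) : 0 < LamSum lam M :=
  lt_of_lt_of_le one_pos (lamsum_ge_one hlam hM)

lemma lamsum_mono (hlam : WatermanSeq lam) : Monotone (LamSum lam) := by
  intro i j hij
  unfold LamSum
  apply Finset.sum_le_sum_of_subset_of_nonneg
  · exact Finset.Icc_subset_Icc le_rfl hij
  · intro k _ _
    exact div_nonneg zero_le_one (hlam.1 k).le

lemma one_le_Mseq (n : ℕ) : 1 ≤ Mseq n := Nat.one_le_two_pow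

lemma sum_card_le (g : ℕ → ℝ) (hg0 : ∀ i, 0 ≤ g i) (hmono : ∀ ⦃i j : ℕ⦄, i ≤ j → g j ≤ g i)
    (S : Finset ℕ) : ∑ i ∈ S, g i ≤ ∑ i ∈ Finset.range S.card, g i := by
  induction S using Finset.strongInduction with
  | _ S ih =>
    rcases S.eq_empty_or_nonempty with rfl | hS
    · simp
    · have hmax := S.max'_mem hS
      set M := S.max' hS with hM
      have h1 : S ⊆ Finset.range (M + 1) := fun x hx =>
        Finset.mem_range.2 (Nat.lt_succ_of_le (S.le_max' x hx))
      have hcard : S.card ≤ M + 1 := le_trans (Finset.card_le_card h1) (by simp)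
      have h2 : (S.erase M).card = S.card - 1 := Finset.card_erase_of_mem hmax
      have h3 := ih (S.erase M) (Finset.erase_ssubset hmax)
      rw [h2] at h3
      have h4 : ∑ i ∈ S, g i = g M + ∑ i ∈ S.erase M, g i :=
        (Finset.add_sum_erase S g hmax).symm
      have hpos : 0 < S.card := Finset.card_pos.2 hS
      have h5 : S.card = (S.card - 1) + 1 := by omega
      rw [h4, h5, Finset.sum_range_succ]
      have h6 : g M ≤ g (S.card - 1) := hmono (by omega)
      linarith

end Aux
section Aux2

variable {lam : ℕ → ℝ} {q : ℝ}

/-- The set of jump points of `h_n`. -/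
def Jset (n : ℕ) : Finset ℝ :=
  ((Finset.Icc 1 ((Mseq n - 2) / 2)).image (bb n)) ∪
    ((Finset.Icc 1 ((Mseq n - 2) / 2)).image (cc n))

lemma Jset_card_le (n : ℕ) : (Jset n).card ≤ Mseq n := by
  unfold Jset
  calc _ ≤ _ := Finset.card_union_le _ _
    _ ≤ (Finset.Icc 1 ((Mseq n - 2) / 2)).card + (Finset.Icc 1 ((Mseq n - 2) / 2)).card :=
        add_le_add (Finset.card_image_le) (Finset.card_image_le)
    _ ≤ Mseq n := by rw [Nat.card_Icc]; omega

lemma jump_exists {n : ℕ} {x y : ℝ} (hxy : x ≤ y)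
    (hne : hfun lam q n x ≠ hfun lam q n y) : ∃ z ∈ Jset n, x < z ∧ z ≤ y := by
  unfold hfun at hne
  split_ifs at hne with hx hy hy
  · exact absurd rfl hne
  · -- x in an interval, y not
    obtain ⟨j, hj1, hj2, hbx, hxc⟩ := hx
    have hcy : cc n j ≤ y := by
      by_contra hc
      push_neg at hc
      exact hy ⟨j, hj1, hj2, le_trans hbx hxy, hc⟩
    refine ⟨cc n j, ?_, hxc, hcy⟩
    exact Finset.mem_union_right _ (Finset.mem_image.2 ⟨j, Finset.mem_Icc.2 ⟨hj1, hj2⟩, rfl⟩)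
  · -- y in an interval, x not
    obtain ⟨j, hj1, hj2, hby, hyc⟩ := hy
    have hxb : x < bb n j := by
      by_contra hc
      push_neg at hc
      exact hx ⟨j, hj1, hj2, hc, lt_of_le_of_lt hxy hyc⟩
    refine ⟨bb n j, ?_, hxb, le_trans hby (le_refl y) |>.trans (le_refl y) |>.trans_eq rfl⟩
    · exact Finset.mem_union_left _ (Finset.mem_image.2 ⟨j, Finset.mem_Icc.2 ⟨hj1, hj2⟩, rfl⟩)
  · exact absurd rfl hne

lemma hfun_values (n : ℕ) (y : ℝ) :
    hfun lam q n y = 0 ∨ hfun lam q n y = ((2:ℝ)^n)⁻¹ * LamSum lam (Mseq n) ^ (-(1 / q)) := by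
  unfold hfun; split_ifs <;> simp

lemma abs_hfun_incr_le (hlam : WatermanSeq lam) (n : ℕ) {x y : ℝ} :
    |hfun lam q n y - hfun lam q n x| ≤ ((2:ℝ)^n)⁻¹ * LamSum lam (Mseq n) ^ (-(1 / q)) := by
  have hd : 0 ≤ ((2:ℝ)^n)⁻¹ * LamSum lam (Mseq n) ^ (-(1 / q)) := by
    have := Real.rpow_nonneg (le_of_lt (lamsum_pos hlam (one_le_Mseq n))) (-(1/q))
    positivity
  rcases hfun_values (lam := lam) (q := q) n y with h1 | h1 <;>
      rcases hfun_values (lam := lam) (q := q) n x with h2 | h2 <;> rw [h1, h2]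
  · rw [sub_zero, abs_zero]; exact hd
  · rw [zero_sub, abs_neg, abs_of_nonneg hd]
  · rw [sub_zero, abs_of_nonneg hd]
  · rw [sub_self, abs_zero]; exact hd

end Aux2
section Aux3

variable {lam : ℕ → ℝ} {q : ℝ}

lemma sum_hfun_le (hlam : WatermanSeq lam) (hq : 1 < q) (n m : ℕ) (a b : ℕ → ℝ)
    (hab : NonOverlapping m a b) :
    ∑ i ∈ Finset.range m, |hfun lam q n (b i) - hfun lam q n (a i)| ^ q / lam (i + 1)
      ≤ (((2:ℝ)^n)⁻¹) ^ q := by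
  have hq0 : (0:ℝ) < q := lt_trans one_pos hq
  set Λ : ℝ := LamSum lam (Mseq n) with hΛ
  have hΛpos : 0 < Λ := lamsum_pos hlam (one_le_Mseq n)
  set d : ℝ := ((2:ℝ)^n)⁻¹ * Λ ^ (-(1 / q)) with hdd
  have hd0 : 0 ≤ d := by
    have := Real.rpow_nonneg hΛpos.le (-(1/q))
    positivity
  set S : Finset ℕ := (Finset.range m).filter
    (fun i => hfun lam q n (a i) ≠ hfun lam q n (b i)) with hS
  -- restrict the sum to S
  have hstep1 : ∑ i ∈ Finset.range m, |hfun lam q n (b i) - hfun lam q n (a i)| ^ q / lam (i + 1)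
      = ∑ i ∈ S, |hfun lam q n (b i) - hfun lam q n (a i)| ^ q / lam (i + 1) := by
    refine (Finset.sum_subset (Finset.filter_subset _ _) ?_).symm
    intro i hir hiS
    have : hfun lam q n (a i) = hfun lam q n (b i) := by
      by_contra hc
      exact hiS (Finset.mem_filter.2 ⟨hir, hc⟩)
    rw [this, sub_self, abs_zero, Real.zero_rpow (ne_of_gt hq0), zero_div]
  -- bound each term on S
  have hstep2 : ∑ i ∈ S, |hfun lam q n (b i) - hfun lam q n (a i)| ^ q / lam (i + 1)
      ≤ d ^ q * ∑ i ∈ S, 1 / lam (i + 1) := by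
    rw [Finset.mul_sum]
    refine Finset.sum_le_sum fun i _ => ?_
    have h1 : |hfun lam q n (b i) - hfun lam q n (a i)| ^ q ≤ d ^ q :=
      Real.rpow_le_rpow (abs_nonneg _) (abs_hfun_incr_le hlam n) hq0.le
    have h2 : 0 < lam (i + 1) := hlam.1 (i + 1)
    calc _ ≤ d ^ q / lam (i + 1) := by exact div_le_div_of_nonneg_right h1 h2.le |>.trans_eq rfl
      _ = d ^ q * (1 / lam (i + 1)) := by ring
  -- the cardinality of S is at most Mseq n
  have hsel : ∀ i, ∃ z, i ∈ S → z ∈ Jset n ∧ a i < z ∧ z ≤ b i := by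
    intro i
    by_cases hi : i ∈ S
    · obtain ⟨hir, hine⟩ := Finset.mem_filter.1 hi
      have hiab := (hab.1 i (Finset.mem_range.1 hir)).2.1
      obtain ⟨z, hz, h1, h2⟩ := jump_exists (lam := lam) (q := q) hiab hine
      exact ⟨z, fun _ => ⟨hz, h1, h2⟩⟩
    · exact ⟨0, fun h => absurd h hi⟩
  choose f hf using hsel
  have hcard : S.card ≤ Mseq n := by
    refine le_trans (Finset.card_le_card_of_injOn f (fun i hi => (hf i hi).1) ?_) (Jset_card_le n)
    intro i hi j hj hfij
    by_contra hne
    obtain ⟨hi1, hi2, hi3⟩ := hf i (by exact Finset.mem_coe.1 hi)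
    obtain ⟨hj1, hj2, hj3⟩ := hf j (by exact Finset.mem_coe.1 hj)
    have him : i < m := Finset.mem_range.1 (Finset.mem_filter.1 (Finset.mem_coe.1 hi)).1
    have hjm : j < m := Finset.mem_range.1 (Finset.mem_filter.1 (Finset.mem_coe.1 hj)).1
    rcases hab.2 i him j hjm hne with h | h
    · linarith
    · linarith
  -- sum of 1/lam over S
  have hstep3 : ∑ i ∈ S, 1 / lam (i + 1) ≤ Λ := by
    have hanti : ∀ ⦃i j : ℕ⦄, i ≤ j → 1 / lam (j + 1) ≤ 1 / lam (i + 1) := fun i j hij =>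
      one_div_le_one_div_of_le (hlam.1 (i + 1)) (hlam.2.1 (Nat.succ_le_succ hij))
    calc ∑ i ∈ S, 1 / lam (i + 1)
        ≤ ∑ i ∈ Finset.range S.card, 1 / lam (i + 1) :=
          sum_card_le _ (fun i => div_nonneg zero_le_one (hlam.1 (i+1)).le) hanti S
      _ = LamSum lam S.card := (lamsum_eq_range _).symm
      _ ≤ Λ := lamsum_mono hlam hcard
  -- combine
  have hdq : d ^ q * Λ = (((2:ℝ)^n)⁻¹) ^ q := by
    have hu0 : (0:ℝ) ≤ ((2:ℝ)^n)⁻¹ := by positivity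
    have hv0 : (0:ℝ) ≤ Λ ^ (-(1/q)) := Real.rpow_nonneg hΛpos.le _
    rw [hdd, Real.mul_rpow hu0 hv0, ← Real.rpow_mul hΛpos.le]
    have : -(1/q) * q = -1 := by field_simp
    rw [this, Real.rpow_neg_one, mul_assoc, inv_mul_cancel₀ (ne_of_gt hΛpos), mul_one]
  have hd0q : 0 ≤ d ^ q := Real.rpow_nonneg hd0 q
  calc ∑ i ∈ Finset.range m, |hfun lam q n (b i) - hfun lam q n (a i)| ^ q / lam (i + 1)
      = ∑ i ∈ S, |hfun lam q n (b i) - hfun lam q n (a i)| ^ q / lam (i + 1) := hstep1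
    _ ≤ d ^ q * ∑ i ∈ S, 1 / lam (i + 1) := hstep2
    _ ≤ d ^ q * Λ := by exact mul_le_mul_of_nonneg_left hstep3 hd0q
    _ = (((2:ℝ)^n)⁻¹) ^ q := hdq

lemma vsum_nonneg (hlam : WatermanSeq lam) (hq : 1 < q) (f : ℝ → ℝ) (m : ℕ) (a b : ℕ → ℝ) :
    0 ≤ vSum lam q f m a b := by
  unfold vSum
  apply Real.rpow_nonneg
  exact Finset.sum_nonneg fun i _ =>
    div_nonneg (Real.rpow_nonneg (abs_nonneg _) q) (hlam.1 (i+1)).le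

lemma vsum_hfun_le (hlam : WatermanSeq lam) (hq : 1 < q) (n m : ℕ) (a b : ℕ → ℝ)
    (hab : NonOverlapping m a b) :
    vSum lam q (hfun lam q n) m a b ≤ ((2:ℝ)^n)⁻¹ := by
  have hq0 : (0:ℝ) < q := lt_trans one_pos hq
  have hnn : 0 ≤ ∑ i ∈ Finset.range m,
      |hfun lam q n (b i) - hfun lam q n (a i)| ^ q / lam (i + 1) :=
    Finset.sum_nonneg fun i _ =>
      div_nonneg (Real.rpow_nonneg (abs_nonneg _) q) (hlam.1 (i+1)).le
  unfold vSum
  calc _ ≤ ((((2:ℝ)^n)⁻¹) ^ q) ^ (1/q) :=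
        Real.rpow_le_rpow hnn (sum_hfun_le hlam hq n m a b hab) (by positivity)
    _ = ((2:ℝ)^n)⁻¹ := by
        rw [← Real.rpow_mul (by positivity), mul_one_div_cancel (ne_of_gt hq0), Real.rpow_one]

end Aux3
section Aux4

variable {lam : ℕ → ℝ} {q : ℝ}

lemma summable_inv_two_pow : Summable (fun n : ℕ => ((2:ℝ)^(n+2))⁻¹) := by
  have h : Summable (fun n : ℕ => ((2:ℝ)⁻¹)^n) :=
    summable_geometric_of_lt_one (by norm_num) (by norm_num)
  refine (h.mul_right (((2:ℝ)⁻¹)^2)).congr fun n => ?_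
  rw [← pow_add, inv_pow]

lemma abs_hfun_le (hlam : WatermanSeq lam) (hq : 1 < q) (n : ℕ) (y : ℝ) :
    |hfun lam q n y| ≤ ((2:ℝ)^n)⁻¹ := by
  have hq0 : (0:ℝ) < q := lt_trans one_pos hq
  rcases hfun_values (lam := lam) (q := q) n y with h | h <;> rw [h]
  · rw [abs_zero]; positivity
  · have hv0 : 0 ≤ LamSum lam (Mseq n) ^ (-(1/q)) :=
      Real.rpow_nonneg (lamsum_pos hlam (one_le_Mseq n)).le _
    have hv1 : LamSum lam (Mseq n) ^ (-(1/q)) ≤ 1 :=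
      Real.rpow_le_one_of_one_le_of_nonpos (lamsum_ge_one hlam (one_le_Mseq n))
        (neg_nonpos.2 (by positivity))
    rw [abs_of_nonneg (by positivity)]
    calc ((2:ℝ)^n)⁻¹ * LamSum lam (Mseq n) ^ (-(1/q)) ≤ ((2:ℝ)^n)⁻¹ * 1 :=
          mul_le_mul_of_nonneg_left hv1 (by positivity)
      _ = ((2:ℝ)^n)⁻¹ := mul_one _

lemma hfun_summable (hlam : WatermanSeq lam) (hq : 1 < q) (y : ℝ) :
    Summable (fun n : ℕ => hfun lam q (n+2) y) := by
  refine Summable.of_norm_bounded summable_inv_two_pow fun n => ?_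
  rw [Real.norm_eq_abs]
  exact abs_hfun_le hlam hq (n+2) y

lemma ofReal_vsum_hh_le (hlam : WatermanSeq lam) (hq : 1 < q) (m : ℕ) (a b : ℕ → ℝ)
    (hab : NonOverlapping m a b) :
    ENNReal.ofReal (vSum lam q (hh lam q) m a b)
      ≤ ∑' n : ℕ, ENNReal.ofReal (vSum lam q (hfun lam q (n+2)) m a b) := by
  have hq0 : (0:ℝ) < q := lt_trans one_pos hq
  set P : ℝ≥0∞ := ENNReal.ofReal q with hP
  haveI : Fact (1 ≤ P) := ⟨by rw [hP]; exact ENNReal.one_le_ofReal.2 hq.le⟩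
  have hPt : P.toReal = q := ENNReal.toReal_ofReal hq0.le
  set c : ℕ → ℝ := fun i => lam (i+1) ^ (-(1/q)) with hc
  have hc0 : ∀ i, 0 ≤ c i := fun i => Real.rpow_nonneg (hlam.1 (i+1)).le _
  have hcq : ∀ i : ℕ, c i ^ q = (lam (i+1))⁻¹ := by
    intro i
    rw [hc, ← Real.rpow_mul (hlam.1 (i+1)).le,
      (show -(1/q) * q = -1 by field_simp), Real.rpow_neg_one]
  have hkey : ∀ f : ℝ → ℝ,
      ‖(WithLp.equiv P (Fin m → ℝ)).symm (fun i : Fin m => (f (b i) - f (a i)) * c i)‖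
        = vSum lam q f m a b := by
    intro f
    rw [PiLp.norm_eq_sum (by rw [hPt]; exact hq0), hPt]
    unfold vSum
    rw [← Fin.sum_univ_eq_sum_range (fun i => |f (b i) - f (a i)| ^ q / lam (i+1)) m]
    congr 1
    refine Finset.sum_congr rfl fun i _ => ?_
    rw [WithLp.equiv_symm_apply, PiLp.toLp_apply, Real.norm_eq_abs, abs_mul, abs_of_nonneg (hc0 i),
      Real.mul_rpow (abs_nonneg _) (hc0 i), hcq, div_eq_mul_inv]
  set W : ℕ → PiLp P (fun _ : Fin m => ℝ) := fun n =>
    (WithLp.equiv P (Fin m → ℝ)).symm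
      (fun i => (hfun lam q (n+2) (b i) - hfun lam q (n+2) (a i)) * c i) with hW
  have hWnorm : ∀ n, ‖W n‖ = vSum lam q (hfun lam q (n+2)) m a b := fun n => hkey _
  have hWle : ∀ n, ‖W n‖ ≤ ((2:ℝ)^(n+2))⁻¹ := fun n => by
    rw [hWnorm]; exact vsum_hfun_le hlam hq _ m a b hab
  have hsumnorm : Summable (fun n => ‖W n‖) :=
    Summable.of_nonneg_of_le (fun n => norm_nonneg _) hWle summable_inv_two_pow
  have hWsummable : Summable W := hsumnorm.of_norm
  have htsum : (∑' n, W n) = (WithLp.equiv P (Fin m → ℝ)).symm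
      (fun i : Fin m => (hh lam q (b i) - hh lam q (a i)) * c i) := by
    apply (WithLp.ext_iff P).2
    funext i
    have hcomp : (∑' n, W n) i = ∑' n, (W n) i :=
      (PiLp.proj (𝕜 := ℝ) (p := P) (β := fun _ : Fin m => ℝ) i).map_tsum hWsummable
    rw [WithLp.equiv_symm_apply, PiLp.toLp_apply, hcomp]
    have h1 : ∑' n, (W n) i
        = ∑' n, (hfun lam q (n+2) (b i) - hfun lam q (n+2) (a i)) * c i := rfl
    rw [h1, tsum_mul_right,
      Summable.tsum_sub (hfun_summable hlam hq (b i)) (hfun_summable hlam hq (a i))]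
    rfl
  have hfinal : vSum lam q (hh lam q) m a b
      ≤ ∑' n, vSum lam q (hfun lam q (n+2)) m a b := by
    calc vSum lam q (hh lam q) m a b = ‖∑' n, W n‖ := by rw [htsum, hkey]
      _ ≤ ∑' n, ‖W n‖ := norm_tsum_le_tsum_norm hsumnorm
      _ = ∑' n, vSum lam q (hfun lam q (n+2)) m a b := tsum_congr hWnorm
  have hsum2 : Summable (fun n => vSum lam q (hfun lam q (n+2)) m a b) := by
    refine hsumnorm.congr fun n => ?_
    rw [hWnorm]
  calc ENNReal.ofReal (vSum lam q (hh lam q) m a b)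
      ≤ ENNReal.ofReal (∑' n, vSum lam q (hfun lam q (n+2)) m a b) :=
        ENNReal.ofReal_le_ofReal hfinal
    _ = ∑' n, ENNReal.ofReal (vSum lam q (hfun lam q (n+2)) m a b) :=
        ENNReal.ofReal_tsum_of_nonneg (fun n => vsum_nonneg hlam hq _ m a b) hsum2

end Aux4
section Aux5

variable {lam : ℕ → ℝ} {q : ℝ}

lemma ofReal_vsum_le_variation (f : ℝ → ℝ) (m : ℕ) (a b : ℕ → ℝ)
    (hab : NonOverlapping m a b) :
    ENNReal.ofReal (vSum lam q f m a b) ≤ variation lam q f := by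
  unfold variation
  exact le_iSup_of_le m (le_iSup_of_le a (le_iSup_of_le b (le_iSup_of_le hab le_rfl)))

lemma variation_hh_le (hlam : WatermanSeq lam) (hq : 1 < q) :
    variation lam q (hh lam q) ≤ ∑' n : ℕ, variation lam q (hfun lam q (n + 2)) := by
  refine iSup_le fun m => iSup_le fun a => iSup_le fun b => iSup_le fun hab => ?_
  calc ENNReal.ofReal (vSum lam q (hh lam q) m a b)
      ≤ ∑' n : ℕ, ENNReal.ofReal (vSum lam q (hfun lam q (n+2)) m a b) :=
        ofReal_vsum_hh_le hlam hq m a b hab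
    _ ≤ ∑' n : ℕ, variation lam q (hfun lam q (n + 2)) :=
        ENNReal.tsum_le_tsum fun n => ofReal_vsum_le_variation _ m a b hab

lemma tsum_variation_le_one (hlam : WatermanSeq lam) (hq : 1 < q) :
    (∑' n : ℕ, variation lam q (hfun lam q (n + 2))) ≤ 1 := by
  have hvar : ∀ n : ℕ, variation lam q (hfun lam q (n + 2))
      ≤ ENNReal.ofReal (((2:ℝ)^(n+2))⁻¹) := by
    intro n
    refine iSup_le fun m => iSup_le fun a => iSup_le fun b => iSup_le fun hab => ?_
    exact ENNReal.ofReal_le_ofReal (vsum_hfun_le hlam hq (n+2) m a b hab)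
  have hgeom : ∑' n : ℕ, ((2:ℝ)^(n+2))⁻¹ = 1/2 := by
    have hg := tsum_geometric_of_lt_one (r := (2:ℝ)⁻¹) (by norm_num) (by norm_num)
    calc ∑' n : ℕ, ((2:ℝ)^(n+2))⁻¹ = ∑' n : ℕ, ((2:ℝ)⁻¹)^n * ((2:ℝ)⁻¹)^2 :=
          tsum_congr fun n => by rw [← pow_add, inv_pow]
      _ = (∑' n : ℕ, ((2:ℝ)⁻¹)^n) * ((2:ℝ)⁻¹)^2 := tsum_mul_right
      _ = 1/2 := by rw [hg]; norm_num
  calc (∑' n : ℕ, variation lam q (hfun lam q (n + 2)))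
      ≤ ∑' n : ℕ, ENNReal.ofReal (((2:ℝ)^(n+2))⁻¹) := ENNReal.tsum_le_tsum hvar
    _ = ENNReal.ofReal (∑' n : ℕ, ((2:ℝ)^(n+2))⁻¹) :=
        (ENNReal.ofReal_tsum_of_nonneg (fun n => by positivity) summable_inv_two_pow).symm
    _ ≤ 1 := by rw [hgeom]; exact ENNReal.ofReal_le_one.2 (by norm_num)

lemma hh_zero (hlam : WatermanSeq lam) (hq : 1 < q) : hh lam q 0 = 0 := by
  have h0 : ∀ n : ℕ, hfun lam q (n + 2) 0 = 0 := by
    intro n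
    unfold hfun
    rw [if_neg]
    rintro ⟨j, hj1, _, hmem⟩
    have hj : (1:ℝ) ≤ (j:ℝ) := by exact_mod_cast hj1
    have hb : (0:ℝ) < bb (n+2) j := by
      unfold bb
      have h1 : (0:ℝ) < ((2:ℝ)^(n+2))⁻¹ := by positivity
      have h2 : (0:ℝ) ≤ (2*(j:ℝ)-2)/2^(4*(n+2)) := by
        apply div_nonneg
        · linarith
        · positivity
      linarith
    exact absurd hmem.1 (not_le.2 hb)
  unfold hh
  simp [h0]

end Aux5
/-- `V_{Λ,q}(h) ≤ ∑_{n=2}^∞ V_{Λ,q}(h_n) ≤ 1`; in particular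
`h ∈ ΛBV^{(q)}` and `‖h‖_{Λ,q} = |h(0)| + V_{Λ,q}(h) ≤ 1`. -/
theorem stmt3 (lam : ℕ → ℝ) (hlam : WatermanSeq lam) (p q : ℝ)
    (hp : 1 < p) (hq : 1 < q) (hpq : 1 / p + 1 / q = 1) :
    variation lam q (hh lam q) ≤ ∑' n : ℕ, variation lam q (hfun lam q (n + 2)) ∧
    (∑' n : ℕ, variation lam q (hfun lam q (n + 2))) ≤ 1 ∧
    variation lam q (hh lam q) < ⊤ ∧
    ENNReal.ofReal |hh lam q 0| + variation lam q (hh lam q) ≤ 1 := by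
  have hA := variation_hh_le hlam hq
  have hB := tsum_variation_le_one hlam hq
  have hAB : variation lam q (hh lam q) ≤ 1 := le_trans hA hB
  refine ⟨hA, hB, lt_of_le_of_lt hAB ENNReal.one_lt_top, ?_⟩
  rw [hh_zero hlam hq, abs_zero, ENNReal.ofReal_zero, zero_add]
  exact hAB
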